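/- Let X be a strictly convex smooth 2-dimensional Banach space with natural parameterization r : ℝ → S_X. For a fixed direction v = r(s), the map θ : S_X → S_X assigning to each x the unique point θ(x) with {x, θ(x)} = S_X ∩ (x + ℝ·v) is a well-defined continuous involution of S_X. -/

import Mathlib

set_option linter.unusedSectionVars false
set_option linter.unusedVariables false


open Metric Set Function Module

section ThetaAux

variable {X : Type*} [NormedAddCommGroup X] [NormedSpace ℝ X] [StrictConvexSpace ℝ X]

/-- The parameter set of points of the line `x + t • v` inside the closed unit ball. -/
def thetaS (v x : X) : Set ℝ := {t : ℝ | ‖x + t • v‖ ≤ 1}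

/-- The largest parameter on the line inside the ball. -/
noncomputable def thetaB (v x : X) : ℝ := sSup (thetaS v x)

lemma thetaS_convex (v x : X) (r : ℝ) : Convex ℝ {t : ℝ | ‖x + t • v‖ ≤ r} := by
  intro t1 h1 t2 h2 a b ha hb hab
  simp only [mem_setOf_eq, smul_eq_mul] at *
  have key : a • (x + t1 • v) + b • (x + t2 • v) = (a + b) • x + (a * t1 + b * t2) • v := by
    module
  rw [hab, one_smul] at key
  calc ‖x + (a * t1 + b * t2) • v‖ = ‖a • (x + t1 • v) + b • (x + t2 • v)‖ := by rw [key]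
    _ ≤ ‖a • (x + t1 • v)‖ + ‖b • (x + t2 • v)‖ := norm_add_le _ _
    _ = a * ‖x + t1 • v‖ + b * ‖x + t2 • v‖ := by
        rw [norm_smul, norm_smul, Real.norm_of_nonneg ha, Real.norm_of_nonneg hb]
    _ ≤ a * r + b * r :=
        add_le_add (mul_le_mul_of_nonneg_left h1 ha) (mul_le_mul_of_nonneg_left h2 hb)
    _ = r := by rw [← add_mul, hab, one_mul]

lemma thetaS_zero_mem {v x : X} (hx : ‖x‖ = 1) : (0 : ℝ) ∈ thetaS v x := by
  simp [thetaS, hx]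

lemma thetaS_nonempty {v x : X} (hx : ‖x‖ = 1) : (thetaS v x).Nonempty :=
  ⟨0, thetaS_zero_mem hx⟩

lemma thetaS_abs_le {v x : X} (hv : ‖v‖ = 1) (hx : ‖x‖ = 1) {t : ℝ} (ht : t ∈ thetaS v x) :
    |t| ≤ 2 := by
  have h1 : ‖t • v‖ ≤ ‖x + t • v‖ + ‖x‖ := by
    calc ‖t • v‖ = ‖(x + t • v) - x‖ := by rw [add_sub_cancel_left]
      _ ≤ ‖x + t • v‖ + ‖x‖ := norm_sub_le _ _
  rw [norm_smul, Real.norm_eq_abs, hv, mul_one, hx] at h1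
  have h2 : ‖x + t • v‖ ≤ 1 := ht
  linarith

lemma thetaS_bddAbove {v x : X} (hv : ‖v‖ = 1) (hx : ‖x‖ = 1) : BddAbove (thetaS v x) :=
  ⟨2, fun t ht => (abs_le.mp (thetaS_abs_le hv hx ht)).2⟩

lemma thetaS_isClosed (v x : X) : IsClosed (thetaS v x) := by
  have h : Continuous fun t : ℝ => ‖x + t • v‖ := by fun_prop
  exact isClosed_le h continuous_const

lemma thetaB_mem {v x : X} (hv : ‖v‖ = 1) (hx : ‖x‖ = 1) : thetaB v x ∈ thetaS v x :=
  (thetaS_isClosed v x).csSup_mem (thetaS_nonempty hx) (thetaS_bddAbove hv hx)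

lemma thetaB_nonneg {v x : X} (hv : ‖v‖ = 1) (hx : ‖x‖ = 1) : 0 ≤ thetaB v x :=
  le_csSup (thetaS_bddAbove hv hx) (thetaS_zero_mem hx)

lemma thetaB_norm {v x : X} (hv : ‖v‖ = 1) (hx : ‖x‖ = 1) : ‖x + thetaB v x • v‖ = 1 := by
  have hle : ‖x + thetaB v x • v‖ ≤ 1 := thetaB_mem hv hx
  rcases eq_or_lt_of_le hle with h | h
  · exact h
  exfalso
  have hc : Continuous fun t : ℝ => ‖x + t • v‖ := by fun_prop
  obtain ⟨δ, hδ, hδ'⟩ := Metric.continuous_iff.mp hc (thetaB v x)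
    (1 - ‖x + thetaB v x • v‖) (by linarith)
  have hd : dist (thetaB v x + δ / 2) (thetaB v x) < δ := by
    rw [Real.dist_eq]
    rw [add_sub_cancel_left, abs_of_nonneg (by linarith)]
    linarith
  have h2 := hδ' _ hd
  rw [Real.dist_eq, abs_sub_lt_iff] at h2
  have hmem : thetaB v x + δ / 2 ∈ thetaS v x := by
    simp only [thetaS, mem_setOf_eq]; linarith [h2.1]
  have h3 : thetaB v x + δ / 2 ≤ thetaB v x := le_csSup (thetaS_bddAbove hv hx) hmem
  linarith

lemma thetaB_neg_norm {v x : X} (hv : ‖v‖ = 1) (hx : ‖x‖ = 1) :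
    ‖x + (-thetaB (-v) x) • v‖ = 1 := by
  have hv' : ‖(-v : X)‖ = 1 := by rwa [norm_neg]
  have := thetaB_norm hv' hx
  rwa [smul_neg, ← neg_smul] at this

lemma thetaB_interior_lt {v x : X} (hv : ‖v‖ = 1) (hx : ‖x‖ = 1) {t : ℝ}
    (ht1 : -thetaB (-v) x < t) (ht2 : t < thetaB v x) : ‖x + t • v‖ < 1 := by
  set A := -thetaB (-v) x with hAdef
  set Bb := thetaB v x with hBdef
  have hA : ‖x + A • v‖ = 1 := thetaB_neg_norm hv hx
  have hB : ‖x + Bb • v‖ = 1 := thetaB_norm hv hx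
  have hAB : A < Bb := ht1.trans ht2
  have hd : (0 : ℝ) < Bb - A := by linarith
  have hvne : v ≠ 0 := fun h => by simp [h] at hv
  have hpq : x + A • v ≠ x + Bb • v := by
    intro h
    have h2 : A • v = Bb • v := by
      have := add_left_cancel h
      exact this
    have h3 : (A - Bb) • v = 0 := by rw [sub_smul, h2, sub_self]
    rcases smul_eq_zero.mp h3 with h4 | h4
    · exact hAB.ne (by linarith [sub_eq_zero.mp h4])
    · exact hvne h4
  set a := (Bb - t) / (Bb - A) with hadef
  set b := (t - A) / (Bb - A) with hbdef
  have ha : 0 < a := div_pos (by linarith) hd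
  have hb : 0 < b := div_pos (by linarith) hd
  have hab : a + b = 1 := by
    rw [hadef, hbdef, ← add_div]
    rw [div_eq_one_iff_eq hd.ne']
    ring
  have key := strictConvex_closedBall ℝ (0 : X) 1
    (mem_closedBall_zero_iff.mpr hA.le) (mem_closedBall_zero_iff.mpr hB.le) hpq ha hb hab
  rw [interior_closedBall (0 : X) one_ne_zero, mem_ball_zero_iff] at key
  have hcoef : a * A + b * Bb = t := by
    rw [hadef, hbdef]
    field_simp
    ring
  have hcomb : a • (x + A • v) + b • (x + Bb • v) = (a + b) • x + (a * A + b * Bb) • v := by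
    module
  rw [hab, one_smul, hcoef] at hcomb
  rwa [hcomb] at key

lemma thetaB_mem_le {v x : X} (hv : ‖v‖ = 1) (hx : ‖x‖ = 1) {t : ℝ}
    (ht : ‖x + t • v‖ ≤ 1) : -thetaB (-v) x ≤ t ∧ t ≤ thetaB v x := by
  constructor
  · have hv' : ‖(-v : X)‖ = 1 := by rwa [norm_neg]
    have hmem : -t ∈ thetaS (-v) x := by
      simp only [thetaS, mem_setOf_eq, smul_neg, neg_smul, neg_neg]
      exact ht
    have h3 : -t ≤ thetaB (-v) x := le_csSup (thetaS_bddAbove hv' hx) hmem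
    linarith
  · exact le_csSup (thetaS_bddAbove hv hx) ht

lemma thetaB_roots {v x : X} (hv : ‖v‖ = 1) (hx : ‖x‖ = 1) {t : ℝ}
    (ht : ‖x + t • v‖ = 1) : t = -thetaB (-v) x ∨ t = thetaB v x := by
  obtain ⟨h1, h2⟩ := thetaB_mem_le hv hx ht.le
  by_contra h
  push_neg at h
  have hlt1 : -thetaB (-v) x < t := lt_of_le_of_ne h1 (Ne.symm h.1)
  have hlt2 : t < thetaB v x := lt_of_le_of_ne h2 h.2
  have := thetaB_interior_lt hv hx hlt1 hlt2
  linarith [ht.ge, this]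

lemma thetaB_zero_root {v x : X} (hv : ‖v‖ = 1) (hx : ‖x‖ = 1) :
    thetaB (-v) x = 0 ∨ thetaB v x = 0 := by
  have h0 : ‖x + (0 : ℝ) • v‖ = 1 := by simp [hx]
  rcases thetaB_roots hv hx h0 with h | h
  · left; linarith [h]
  · right; exact h.symm

lemma thetaB_shift {v x : X} (hv : ‖v‖ = 1) (hx : ‖x‖ = 1) (c : ℝ) :
    thetaB v (x + c • v) = thetaB v x - c := by
  have hlub : IsLUB (thetaS v x) (thetaB v x) :=
    isLUB_csSup (thetaS_nonempty hx) (thetaS_bddAbove hv hx)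
  have hset : thetaS v (x + c • v) = {t : ℝ | t + c ∈ thetaS v x} := by
    ext t
    have heq : x + c • v + t • v = x + (t + c) • v := by module
    simp only [thetaS, mem_setOf_eq, heq]
  have hne : {t : ℝ | t + c ∈ thetaS v x}.Nonempty := by
    refine ⟨thetaB v x - c, ?_⟩
    simp only [mem_setOf_eq, sub_add_cancel]
    exact thetaB_mem hv hx
  have hlub2 : IsLUB {t : ℝ | t + c ∈ thetaS v x} (thetaB v x - c) := by
    constructor
    · intro t ht
      have := hlub.1 ht
      linarith
    · intro u hu
      have h2 : thetaB v x ≤ u + c := by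
        apply hlub.2
        intro s hs
        have : s - c ∈ {t : ℝ | t + c ∈ thetaS v x} := by
          simp only [mem_setOf_eq, sub_add_cancel]; exact hs
        have := hu this
        linarith
      linarith
  rw [thetaB, hset, hlub2.csSup_eq hne]

lemma thetaB_neg_shift {v x : X} (hv : ‖v‖ = 1) (hx : ‖x‖ = 1) (c : ℝ) :
    thetaB (-v) (x + c • v) = thetaB (-v) x + c := by
  have hv' : ‖(-v : X)‖ = 1 := by rwa [norm_neg]
  have h1 : x + c • v = x + (-c) • (-v) := by module
  rw [h1, thetaB_shift hv' hx (-c)]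
  ring

/-- The signed chord length. -/
noncomputable def thetaC (v x : X) : ℝ := thetaB v x - thetaB (-v) x

lemma thetaC_norm {v x : X} (hv : ‖v‖ = 1) (hx : ‖x‖ = 1) :
    ‖x + thetaC v x • v‖ = 1 := by
  rcases thetaB_zero_root hv hx with h | h
  · have : thetaC v x = thetaB v x := by simp [thetaC, h]
    rw [this]; exact thetaB_norm hv hx
  · have : thetaC v x = -thetaB (-v) x := by simp [thetaC, h]
    rw [this]; exact thetaB_neg_norm hv hx

lemma thetaC_shift {v x : X} (hv : ‖v‖ = 1) (hx : ‖x‖ = 1) :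
    thetaC v (x + thetaC v x • v) = -thetaC v x := by
  rw [thetaC, thetaB_shift hv hx, thetaB_neg_shift hv hx, thetaC]
  ring

lemma thetaB_roots2 {v x : X} (hv : ‖v‖ = 1) (hx : ‖x‖ = 1) {t : ℝ}
    (ht : ‖x + t • v‖ = 1) : t = 0 ∨ t = thetaC v x := by
  rcases thetaB_roots hv hx ht with h | h <;> rcases thetaB_zero_root hv hx with h0 | h0
  · left; rw [h, h0, neg_zero]
  · right; rw [h, thetaC, h0, zero_sub]
  · right; rw [h, thetaC]; simp [h0]
  · left; rw [h, h0]

/-- Quantitative continuity of `thetaB` on the unit sphere. -/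
lemma thetaB_cont {v x : X} (hv : ‖v‖ = 1) (hx : ‖x‖ = 1) {ε : ℝ} (hε : 0 < ε) :
    ∃ δ > 0, ∀ x' : X, ‖x'‖ = 1 → ‖x' - x‖ < δ → |thetaB v x' - thetaB v x| ≤ ε := by
  -- upper bound
  obtain ⟨δ1, hδ1, hU⟩ :
      ∃ δ > 0, ∀ x' : X, ‖x'‖ = 1 → ‖x' - x‖ < δ → thetaB v x' ≤ thetaB v x + ε := by
    set t1 := thetaB v x + ε with ht1def
    have ht1 : 1 < ‖x + t1 • v‖ := by
      by_contra h
      push_neg at h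
      have : t1 ≤ thetaB v x := le_csSup (thetaS_bddAbove hv hx) h
      linarith
    refine ⟨‖x + t1 • v‖ - 1, by linarith, fun x' hx' hd => ?_⟩
    by_contra h
    push_neg at h
    set t := thetaB v x' with htdef
    have htgt : t1 < t := h
    have hxt : ‖x + t • v‖ ≤ ‖x' + t • v‖ + ‖x - x'‖ := by
      have he : x + t • v = (x' + t • v) + (x - x') := by module
      rw [he]; exact norm_add_le _ _
    have hx't : ‖x' + t • v‖ = 1 := thetaB_norm hv hx'
    have hxx' : ‖x - x'‖ < ‖x + t1 • v‖ - 1 := by rwa [norm_sub_rev] at hd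
    have hlt : ‖x + t • v‖ < ‖x + t1 • v‖ := by rw [hx't] at hxt; linarith
    set m := max 1 ‖x + t • v‖ with hm
    have hmlt : m < ‖x + t1 • v‖ := max_lt ht1 hlt
    have hDconv := thetaS_convex v x m
    have hBmem : thetaB v x ∈ {u : ℝ | ‖x + u • v‖ ≤ m} := by
      simp only [mem_setOf_eq, thetaB_norm hv hx]; exact le_max_left _ _
    have htmem : t ∈ {u : ℝ | ‖x + u • v‖ ≤ m} := by
      simp only [mem_setOf_eq]; exact le_max_right _ _
    have ht1mem : t1 ∈ {u : ℝ | ‖x + u • v‖ ≤ m} :=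
      hDconv.ordConnected.out hBmem htmem ⟨by linarith, htgt.le⟩
    have : ‖x + t1 • v‖ ≤ m := ht1mem
    linarith
  -- lower bound
  obtain ⟨δ2, hδ2, hL⟩ :
      ∃ δ > 0, ∀ x' : X, ‖x'‖ = 1 → ‖x' - x‖ < δ → thetaB v x - ε ≤ thetaB v x' := by
    rcases le_or_gt (thetaB v x) ε with h | h
    · exact ⟨1, one_pos, fun x' hx' _ => by linarith [thetaB_nonneg hv hx']⟩
    · set t0 := thetaB v x - ε with ht0def
      have ht0pos : 0 < t0 := by linarith
      have hA : -thetaB (-v) x ≤ 0 := by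
        have hv' : ‖(-v : X)‖ = 1 := by rwa [norm_neg]
        linarith [thetaB_nonneg hv' hx]
      have hint : ‖x + t0 • v‖ < 1 :=
        thetaB_interior_lt hv hx (by linarith) (by linarith)
      refine ⟨1 - ‖x + t0 • v‖, by linarith, fun x' hx' hd => ?_⟩
      have hxt : ‖x' + t0 • v‖ ≤ ‖x + t0 • v‖ + ‖x' - x‖ := by
        have he : x' + t0 • v = (x + t0 • v) + (x' - x) := by module
        rw [he]; exact norm_add_le _ _
      have hmem : t0 ∈ thetaS v x' := by
        simp only [thetaS, mem_setOf_eq]; linarith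
      have h3 : t0 ≤ thetaB v x' := le_csSup (thetaS_bddAbove hv hx') hmem
      linarith
  refine ⟨min δ1 δ2, lt_min hδ1 hδ2, fun x' hx' hd => ?_⟩
  have h1 := hU x' hx' (hd.trans_le (min_le_left _ _))
  have h2 := hL x' hx' (hd.trans_le (min_le_right _ _))
  rw [abs_le]
  constructor <;> linarith

end ThetaAux

theorem exists_continuous_involution_theta
    (X : Type*) [NormedAddCommGroup X] [NormedSpace ℝ X] [StrictConvexSpace ℝ X]
    (hdim : finrank ℝ X = 2)
    (hsmooth : ∀ x : X, x ≠ 0 → DifferentiableAt ℝ (fun y : X => ‖y‖) x)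
    (r : ℝ → X) (hr : ContDiff ℝ 1 r)
    (hr1 : ∀ t, ‖r t‖ = 1) (hdr : ∀ t, ‖deriv r t‖ = 1)
    (s : ℝ) (v : X) (hv : v = r s) :
    ∃ θ : sphere (0 : X) 1 → sphere (0 : X) 1,
      Continuous θ ∧ (∀ x, θ (θ x) = x) ∧
      ∀ x : sphere (0 : X) 1,
        {y : X | ‖y‖ = 1 ∧ ∃ t : ℝ, y = (x : X) + t • v} = {(x : X), ((θ x : X))} := by
  have hv1 : ‖v‖ = 1 := by rw [hv]; exact hr1 s
  have hxs : ∀ x : sphere (0 : X) 1, ‖(x : X)‖ = 1 := fun x =>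
    mem_sphere_zero_iff_norm.mp x.2
  refine ⟨fun x => ⟨(x : X) + thetaC v x • v,
    mem_sphere_zero_iff_norm.mpr (thetaC_norm hv1 (hxs x))⟩, ?_, ?_, ?_⟩
  · -- continuity
    have hBc : ∀ w : X, ‖w‖ = 1 →
        Continuous fun p : sphere (0 : X) 1 => thetaB w (p : X) := by
      intro w hw
      rw [Metric.continuous_iff]
      intro p ε hε
      obtain ⟨δ, hδ, h⟩ := thetaB_cont hw (hxs p) (half_pos hε)
      refine ⟨δ, hδ, fun q hq => ?_⟩
      rw [Subtype.dist_eq, dist_eq_norm] at hq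
      have := h (q : X) (hxs q) hq
      rw [Real.dist_eq]
      linarith [this, abs_le.mp this]
    have hC : Continuous fun p : sphere (0 : X) 1 => thetaC v (p : X) := by
      have h1 := hBc v hv1
      have h2 := hBc (-v) (by rwa [norm_neg])
      exact h1.sub h2
    have hmap : Continuous fun p : sphere (0 : X) 1 =>
        (p : X) + thetaC v (p : X) • v :=
      continuous_subtype_val.add (hC.smul continuous_const)
    exact hmap.subtype_mk _
  · -- involution
    intro x
    apply Subtype.ext
    show ((x : X) + thetaC v x • v) + thetaC v ((x : X) + thetaC v x • v) • v = (x : X)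
    rw [thetaC_shift hv1 (hxs x)]
    module
  · -- the set equality
    intro x
    ext y
    simp only [mem_setOf_eq, mem_insert_iff, mem_singleton_iff]
    constructor
    · rintro ⟨hy, t, rfl⟩
      rcases thetaB_roots2 hv1 (hxs x) hy with h | h
      · left; rw [h, zero_smul, add_zero]
      · right; rw [h]
    · rintro (rfl | rfl)
      · exact ⟨hxs x, 0, by rw [zero_smul, add_zero]⟩
      · exact ⟨thetaC_norm hv1 (hxs x), thetaC v x, rfl⟩
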